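/- With the notation of the previous statement, and defining μ_s^{(m)} = e_sᵀ ∑_{j=0}^m (1−α)^j P̃^j and writing W = complement of K in {1,…,n}, for every m ≥ 1 one has ‖π_s − (α e_sᵀ + ∑_{k∈K} β_s(k)π_k)‖₁ ≤ α·(μ_s^{(m−1)}(W) − 1) + (1−α)^m·e_sᵀ P̃^m e_W. -/

import Mathlib

open Matrix
open scoped NNReal

attribute [local instance] Matrix.linftyOpNormedRing Matrix.linftyOpNormedSpace

lemma aux_pow_nonneg {n : ℕ} {A : Matrix (Fin n) (Fin n) ℝ} (h0 : ∀ i j, 0 ≤ A i j) :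
    ∀ k i j, 0 ≤ (A ^ k) i j := by
  intro k
  induction k with
  | zero => intro i j; simp [Matrix.one_apply]; positivity
  | succ k ih =>
      intro i j
      rw [pow_succ, Matrix.mul_apply]
      exact Finset.sum_nonneg fun l _ => mul_nonneg (ih i l) (h0 l j)

lemma aux_neumann {n : ℕ} (A : Matrix (Fin n) (Fin n) ℝ)
    (hA : ‖A‖ < 1) (h0 : ∀ i j, 0 ≤ A i j) :
    IsUnit (1 - A) ∧ ∀ i j, 0 ≤ (1 - A)⁻¹ i j := by
  refine ⟨isUnit_one_sub_of_norm_lt_one hA, ?_⟩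
  intro i j
  rw [Matrix.nonsing_inv_eq_ringInverse, ← geom_series_eq_inverse A hA]
  have hsum : Summable fun k : ℕ => A ^ k := summable_geometric_of_norm_lt_one hA
  let E : Matrix (Fin n) (Fin n) ℝ →ₗ[ℝ] ℝ :=
    { toFun := fun B => B i j, map_add' := fun _ _ => rfl, map_smul' := fun _ _ => rfl }
  have hbound : ∀ B : Matrix (Fin n) (Fin n) ℝ, ‖E B‖ ≤ 1 * ‖B‖ := by
    intro B
    rw [one_mul, Matrix.linfty_opNorm_def]
    have h1 : ‖B i j‖₊ ≤ ∑ k, ‖B i k‖₊ :=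
      Finset.single_le_sum (f := fun k => ‖B i k‖₊) (fun k _ => zero_le) (Finset.mem_univ j)
    have h2 : (∑ k, ‖B i k‖₊) ≤ (Finset.univ : Finset (Fin n)).sup fun i => ∑ k, ‖B i k‖₊ :=
      Finset.le_sup (f := fun i => ∑ k, ‖B i k‖₊) (Finset.mem_univ i)
    calc ‖E B‖ = (‖B i j‖₊ : ℝ) := rfl
    _ ≤ _ := NNReal.coe_le_coe.mpr (h1.trans h2)
  let Ec : Matrix (Fin n) (Fin n) ℝ →L[ℝ] ℝ := LinearMap.mkContinuous E 1 hbound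
  have heq : (∑' k : ℕ, A ^ k) i j = ∑' k : ℕ, (A ^ k) i j := Ec.map_tsum hsum
  have h : 0 ≤ ∑' k : ℕ, (A ^ k) i j := tsum_nonneg fun k => aux_pow_nonneg h0 k i j
  rw [← heq] at h
  exact h

lemma aux_norm_lt_one {n : ℕ} (A : Matrix (Fin n) (Fin n) ℝ) (r : ℝ) (hr : r < 1)
    (h0 : ∀ i j, 0 ≤ A i j) (hrow : ∀ i, ∑ j, A i j ≤ r) : ‖A‖ < 1 := by
  rw [Matrix.linfty_opNorm_def]
  have key : ((Finset.univ : Finset (Fin n)).sup fun i => ∑ j, ‖A i j‖₊) < 1 := by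
    refine Finset.sup_lt_iff (by norm_num) |>.mpr fun i _ => ?_
    rw [← NNReal.coe_lt_coe, NNReal.coe_sum, NNReal.coe_one]
    have he : ∑ j, (‖A i j‖₊ : ℝ) = ∑ j, A i j := by
      refine Finset.sum_congr rfl fun j _ => ?_
      rw [coe_nnnorm, Real.norm_eq_abs, abs_of_nonneg (h0 i j)]
    rw [he]; exact lt_of_le_of_lt (hrow i) hr
  exact_mod_cast key

/-- m-step neighborhood bound on the ℓ¹ estimation error:
‖π_s − (α e_sᵀ + ∑_k β_s(k) π_k)‖₁ ≤ α (μ_s^{(m−1)}(W) − 1) + (1−α)^m e_sᵀ P̃^m e_W. -/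
theorem stmt9 {n : ℕ} (P : Matrix (Fin n) (Fin n) ℝ)
    (hP0 : ∀ i j, 0 ≤ P i j) (hP1 : ∀ i, ∑ j, P i j = 1)
    (α : ℝ) (hα0 : 0 < α) (hα1 : α < 1)
    (K : Finset (Fin n)) (s : Fin n) (hs : s ∉ K)
    (U : Fin n → ℝ) (hUdef : ∀ i, U i = if i ∈ K then 0 else 1)
    (Pt : Matrix (Fin n) (Fin n) ℝ) (hPt : Pt = Matrix.of fun i j => U i * P i j)
    (eK : Fin n → ℝ) (heK : eK = fun i => if i ∈ K then 1 else 0)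
    (π : Fin n → Fin n → ℝ)
    (hπ : ∀ v, π v = α • ((Pi.single v 1 : Fin n → ℝ) ᵥ* (1 - (1 - α) • P)⁻¹))
    (πt : Fin n → ℝ)
    (hπt : πt = α • ((Pi.single s 1 : Fin n → ℝ) ᵥ*
      (1 - (1 - α) • (Pt + vecMulVec eK (Pi.single s 1)))⁻¹))
    (β : Fin n → ℝ)
    (hβ : ∀ k, β k = πt k / (α + (1 - α) * ∑ k' ∈ K, πt k'))
    (hubs : ∀ v, π s v =
      (α * U v * πt v + ∑ k ∈ K, πt k * π k v) / (α + (1 - α) * ∑ k ∈ K, πt k))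
    (μm : ℕ → Fin n → ℝ)
    (hμm : ∀ m, μm m = (Pi.single s 1 : Fin n → ℝ) ᵥ*
      ∑ j ∈ Finset.range (m + 1), (1 - α) ^ j • Pt ^ j) :
    ∀ m, 1 ≤ m →
      ∑ w : Fin n, |π s w - (α * (Pi.single s 1 : Fin n → ℝ) w + ∑ k ∈ K, β k * π k w)| ≤
        α * ((∑ w ∈ Kᶜ, μm (m - 1) w) - 1) +
          (1 - α) ^ m * ∑ w ∈ Kᶜ, ((Pi.single s 1 : Fin n → ℝ) ᵥ* Pt ^ m) w := by
  intro m hm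
  classical
  set e : Fin n → ℝ := (Pi.single s 1 : Fin n → ℝ) with he
  set Q : Matrix (Fin n) (Fin n) ℝ := Pt + vecMulVec eK e with hQ
  set D : ℝ := α + (1 - α) * ∑ k ∈ K, πt k with hDdef
  have hU0 : ∀ i, 0 ≤ U i := by intro i; rw [hUdef]; split <;> norm_num
  have he0 : ∀ j, 0 ≤ e j := by
    intro j; rw [he, Pi.single_apply]; split <;> norm_num
  have hesum : ∑ j, e j = 1 := by
    rw [he]; exact Fintype.sum_pi_single' s 1
  have hens : ∀ w, w ≠ s → e w = 0 := by
    intro w hw; rw [he]; exact Pi.single_eq_of_ne hw 1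
  have hes : e s = 1 := by rw [he]; exact Pi.single_eq_same s 1
  have hPt0 : ∀ i j, 0 ≤ Pt i j := by
    intro i j; rw [hPt]; exact mul_nonneg (hU0 i) (hP0 i j)
  have hPtrow : ∀ i, ∑ j, Pt i j = U i := by
    intro i; rw [hPt]
    simp only [Matrix.of_apply]
    rw [← Finset.mul_sum, hP1 i, mul_one]
  have hQ0 : ∀ i j, 0 ≤ Q i j := by
    intro i j
    rw [hQ]
    simp only [Matrix.add_apply, Matrix.vecMulVec_apply]
    have : 0 ≤ eK i := by rw [heK]; dsimp only; split <;> norm_num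
    exact add_nonneg (hPt0 i j) (mul_nonneg this (he0 j))
  have hQrow : ∀ i, ∑ j, Q i j = 1 := by
    intro i
    rw [hQ]
    simp only [Matrix.add_apply, Matrix.vecMulVec_apply]
    rw [Finset.sum_add_distrib, hPtrow i, ← Finset.mul_sum, hesum, mul_one, hUdef, heK]
    dsimp only
    split <;> norm_num
  -- the Neumann facts
  have h1α : (0:ℝ) < 1 - α := by linarith
  have hnorm : ‖(1 - α) • Q‖ < 1 := by
    refine aux_norm_lt_one _ (1 - α) (by linarith) ?_ ?_
    · intro i j
      simp only [Matrix.smul_apply, smul_eq_mul]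
      exact mul_nonneg h1α.le (hQ0 i j)
    · intro i
      simp only [Matrix.smul_apply, smul_eq_mul]
      rw [← Finset.mul_sum, hQrow i, mul_one]
  obtain ⟨hMu, hMinv0⟩ := aux_neumann ((1 - α) • Q) hnorm (by
    intro i j
    simp only [Matrix.smul_apply, smul_eq_mul]
    exact mul_nonneg h1α.le (hQ0 i j))
  -- πt nonnegative
  have hev : e ᵥ* (1 - (1 - α) • Q)⁻¹ = (1 - (1 - α) • Q)⁻¹ s := by
    rw [he]; exact Matrix.single_one_vecMul s _
  have hπt0 : ∀ v, 0 ≤ πt v := by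
    intro v
    rw [hπt]
    simp only [Pi.smul_apply, smul_eq_mul]
    have : (e ᵥ* (1 - (1 - α) • Q)⁻¹) v = (1 - (1 - α) • Q)⁻¹ s v := by rw [hev]
    rw [this]
    exact mul_nonneg hα0.le (hMinv0 s v)
  have ht0 : 0 ≤ ∑ k ∈ K, πt k := Finset.sum_nonneg fun k _ => hπt0 k
  have hD0 : 0 < D := by
    rw [hDdef]
    have : 0 ≤ (1 - α) * ∑ k ∈ K, πt k := mul_nonneg h1α.le ht0
    linarith
  -- key equation
  have hMdet : IsUnit (1 - (1 - α) • Q).det := (Matrix.isUnit_iff_isUnit_det _).mp hMu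
  have h1 : πt ᵥ* (1 - (1 - α) • Q) = α • e := by
    rw [hπt, Matrix.smul_vecMul, Matrix.vecMul_vecMul,
      Matrix.nonsing_inv_mul _ hMdet, Matrix.vecMul_one]
  have hsmulmat : ∀ (c : ℝ) (x : Fin n → ℝ) (B : Matrix (Fin n) (Fin n) ℝ),
      x ᵥ* (c • B) = c • (x ᵥ* B) := by
    intro c x B; ext j
    simp only [Matrix.vecMul, dotProduct, Pi.smul_apply, Matrix.smul_apply, smul_eq_mul,
      Finset.mul_sum]
    exact Finset.sum_congr rfl fun i _ => by ring
  have h2 : πt ᵥ* (1 - (1 - α) • Q) = πt - (1 - α) • (πt ᵥ* Q) := by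
    rw [Matrix.vecMul_sub, Matrix.vecMul_one, hsmulmat]
  have h3 : πt ᵥ* Q = (πt ᵥ* Pt) + (∑ k ∈ K, πt k) • e := by
    rw [hQ, Matrix.vecMul_add]
    congr 1
    ext j
    simp only [Matrix.vecMul, dotProduct, Matrix.vecMulVec_apply, Pi.smul_apply,
      smul_eq_mul]
    have : ∑ i, πt i * (eK i * e j) = (∑ i, πt i * eK i) * e j := by
      rw [Finset.sum_mul]
      exact Finset.sum_congr rfl fun i _ => by ring
    rw [this]
    congr 1
    rw [heK]
    simp only [mul_ite, mul_one, mul_zero]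
    rw [Finset.sum_ite_mem, Finset.univ_inter]
  have hkey : πt = D • e + (1 - α) • (πt ᵥ* Pt) := by
    have h4 := h1
    rw [h2, h3] at h4
    funext v
    have hv := congrFun h4 v
    simp only [Pi.sub_apply, Pi.add_apply, Pi.smul_apply, smul_eq_mul, hDdef] at hv ⊢
    ring_nf at hv ⊢
    linarith
  -- ν
  set ν : Fin n → ℝ := D⁻¹ • πt with hν
  have hνapp : ∀ v, ν v = πt v / D := by
    intro v; rw [hν]; simp only [Pi.smul_apply, smul_eq_mul]; rw [div_eq_inv_mul]
  have hνkey : ν = e + (1 - α) • (ν ᵥ* Pt) := by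
    have hvm : ν ᵥ* Pt = D⁻¹ • (πt ᵥ* Pt) := by rw [hν, Matrix.smul_vecMul]
    funext v
    have h := congrFun hkey v
    simp only [Pi.add_apply, Pi.smul_apply, smul_eq_mul, hvm, hν, Matrix.smul_vecMul] at h ⊢
    field_simp
    linear_combination h
  have hν0 : ∀ v, 0 ≤ ν v := by
    intro v; rw [hνapp]; exact div_nonneg (hπt0 v) hD0.le
  have hvm0 : ∀ (x : Fin n → ℝ), (∀ i, 0 ≤ x i) → ∀ (B : Matrix (Fin n) (Fin n) ℝ),
      (∀ i j, 0 ≤ B i j) → ∀ j, 0 ≤ (x ᵥ* B) j := by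
    intro x hx B hB j
    simp only [Matrix.vecMul, dotProduct]
    exact Finset.sum_nonneg fun i _ => mul_nonneg (hx i) (hB i j)
  have hνs : 1 ≤ ν s := by
    have h := congrFun hνkey s
    simp only [Pi.add_apply, Pi.smul_apply, smul_eq_mul] at h
    rw [hes] at h
    have h2 := mul_nonneg h1α.le (hvm0 ν hν0 Pt hPt0 s)
    linarith
  -- unrolling
  have hunroll : ∀ j : ℕ,
      ν = (e ᵥ* ∑ i ∈ Finset.range j, (1 - α) ^ i • Pt ^ i) + (1 - α) ^ j • (ν ᵥ* Pt ^ j) := by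
    intro j
    induction j with
    | zero => simp [Matrix.vecMul_one]
    | succ j ih =>
      rw [Finset.sum_range_succ, Matrix.vecMul_add]
      have hstep : ν ᵥ* Pt ^ j = e ᵥ* Pt ^ j + (1 - α) • (ν ᵥ* Pt ^ (j + 1)) := by
        conv_lhs => rw [hνkey]
        rw [Matrix.add_vecMul, Matrix.smul_vecMul, Matrix.vecMul_vecMul, ← pow_succ']
      calc ν = e ᵥ* ∑ i ∈ Finset.range j, (1 - α) ^ i • Pt ^ i + (1 - α) ^ j • (ν ᵥ* Pt ^ j) := ih
      _ = _ := by
        rw [hstep, smul_add, smul_smul, ← pow_succ, ← hsmulmat]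
        exact (add_assoc _ _ _).symm
  -- pointwise error formula
  have herr : ∀ w, π s w - (α * e w + ∑ k ∈ K, β k * π k w) = α * (U w * ν w - e w) := by
    intro w
    rw [hubs w]
    have hsum : ∑ k ∈ K, β k * π k w = (∑ k ∈ K, πt k * π k w) / D := by
      rw [Finset.sum_div]
      exact Finset.sum_congr rfl fun k _ => by rw [hβ k]; ring
    rw [hsum, hνapp w]
    field_simp [hD0.ne']
    ring
  have habs : ∀ w, |π s w - (α * e w + ∑ k ∈ K, β k * π k w)| = α * (U w * ν w - e w) := by
    intro w
    rw [herr w, abs_of_nonneg]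
    refine mul_nonneg hα0.le ?_
    by_cases hw : w ∈ K
    · rw [hUdef w, if_pos hw, hens w (fun h => hs (h ▸ hw))]
      norm_num
    · rw [hUdef w, if_neg hw, one_mul]
      by_cases hws : w = s
      · subst hws; rw [hes]; linarith
      · rw [hens w hws]; linarith [hν0 w]
  -- sum splitting
  have hsplit : ∑ w : Fin n, |π s w - (α * e w + ∑ k ∈ K, β k * π k w)|
      = α * ((∑ w ∈ Kᶜ, ν w) - 1) := by
    rw [Finset.sum_congr rfl fun w _ => habs w]
    rw [← Finset.sum_add_sum_compl K]
    have hK0 : ∑ w ∈ K, α * (U w * ν w - e w) = 0 := by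
      refine Finset.sum_eq_zero fun w hw => ?_
      rw [hUdef w, if_pos hw, hens w (fun h => hs (h ▸ hw))]
      ring
    rw [hK0, zero_add]
    have hKc : ∑ w ∈ Kᶜ, α * (U w * ν w - e w) = α * ((∑ w ∈ Kᶜ, ν w) - ∑ w ∈ Kᶜ, e w) := by
      rw [← Finset.sum_sub_distrib, Finset.mul_sum]
      refine Finset.sum_congr rfl fun w hw => ?_
      rw [hUdef w, if_neg (Finset.mem_compl.mp hw), one_mul]
    have heKc : ∑ w ∈ Kᶜ, e w = 1 := by
      rw [he, Finset.sum_pi_single', if_pos (Finset.mem_compl.mpr hs)]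
    rw [hKc, heKc]
  -- relating to μm
  have hm' : m - 1 + 1 = m := Nat.succ_pred_eq_of_pos hm
  have hμW : ∑ w ∈ Kᶜ, ν w
      = (∑ w ∈ Kᶜ, μm (m - 1) w) + (1 - α) ^ m * ∑ w ∈ Kᶜ, (ν ᵥ* Pt ^ m) w := by
    rw [hμm (m - 1), hm', Finset.mul_sum, ← Finset.sum_add_distrib]
    refine Finset.sum_congr rfl fun w _ => ?_
    have h := congrFun (hunroll m) w
    simpa using h
  -- tail bound
  set x : Fin n → ℝ := ν ᵥ* Pt ^ m with hx
  have hx0 : ∀ j, 0 ≤ x j := hvm0 ν hν0 (Pt ^ m) (aux_pow_nonneg hPt0 m)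
  have hrec : x = e ᵥ* Pt ^ m + (1 - α) • (x ᵥ* Pt) := by
    rw [hx]
    conv_lhs => rw [hνkey]
    rw [Matrix.add_vecMul, Matrix.smul_vecMul, Matrix.vecMul_vecMul, ← pow_succ', pow_succ,
      ← Matrix.vecMul_vecMul]
  have hT : ∑ w ∈ Kᶜ, (x ᵥ* Pt) w ≤ ∑ w ∈ Kᶜ, x w := by
    have expand : ∑ w ∈ Kᶜ, (x ᵥ* Pt) w = ∑ i, x i * ∑ w ∈ Kᶜ, Pt i w := by
      simp only [Matrix.vecMul, dotProduct]
      rw [Finset.sum_comm]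
      exact Finset.sum_congr rfl fun i _ => by rw [Finset.mul_sum]
    rw [expand]
    have hcol : ∀ i, ∑ w ∈ Kᶜ, Pt i w ≤ U i := by
      intro i
      calc ∑ w ∈ Kᶜ, Pt i w ≤ ∑ w : Fin n, Pt i w :=
        Finset.sum_le_sum_of_subset_of_nonneg (Finset.subset_univ _) fun j _ _ => hPt0 i j
      _ = U i := hPtrow i
    calc ∑ i, x i * ∑ w ∈ Kᶜ, Pt i w ≤ ∑ i, x i * U i :=
      Finset.sum_le_sum fun i _ => mul_le_mul_of_nonneg_left (hcol i) (hx0 i)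
    _ = ∑ w ∈ Kᶜ, x w := by
      rw [show ∑ w ∈ Kᶜ, x w = ∑ i ∈ Finset.univ ∩ Kᶜ, x i by rw [Finset.univ_inter],
        ← Finset.sum_ite_mem]
      refine Finset.sum_congr rfl fun i _ => ?_
      rw [hUdef i]
      by_cases hi : i ∈ K
      · simp [hi]
      · simp [hi]
  have hS : α * (∑ w ∈ Kᶜ, x w) ≤ ∑ w ∈ Kᶜ, (e ᵥ* Pt ^ m) w := by
    have h1 : ∑ w ∈ Kᶜ, x w
        = ∑ w ∈ Kᶜ, (e ᵥ* Pt ^ m) w + (1 - α) * ∑ w ∈ Kᶜ, (x ᵥ* Pt) w := by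
      rw [Finset.mul_sum, ← Finset.sum_add_distrib]
      refine Finset.sum_congr rfl fun w _ => ?_
      have h := congrFun hrec w
      simpa using h
    have h2 : (1 - α) * ∑ w ∈ Kᶜ, (x ᵥ* Pt) w ≤ (1 - α) * ∑ w ∈ Kᶜ, x w :=
      mul_le_mul_of_nonneg_left hT h1α.le
    linarith
  rw [hsplit, hμW]
  have hpow : (0:ℝ) ≤ (1 - α) ^ m := pow_nonneg h1α.le m
  have hfin := mul_le_mul_of_nonneg_left hS hpow
  nlinarith [hfin]
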